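/- arXiv:2505.23437 — 2 statements merged into one kernel-verified Lean document; each statement's English description precedes it below -/
import Mathlib

section
/- Optimality of risk-thresholding (finite version): let Ω be a finite set with probability mass p, r : Ω → [0,∞) a conditional risk, c ∈ (0,1], and β with P(r<β) ≤ c ≤ P(r≤β). Let g* : Ω → [0,1] satisfy g*=1 on {r<β}, g*=0 on {r>β}, and Σ p·g* = c. Then for every g : Ω → [0,1] with Σ_ω p(ω) g(ω) ≥ c, the selective risk satisfies Σ p·g·r / Σ p·g ≥ Σ p·g*·r / c. -/
open Finset

/-- Optimality of risk-thresholding (finite version): the thresholding selection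
function `g*` minimizes the selective risk among all selection functions with
coverage at least `c`. -/
theorem threshold_optimal {Ω : Type*} [Fintype Ω] (p : Ω → ℝ)
    (hp0 : ∀ ω, 0 ≤ p ω) (hp1 : ∑ ω, p ω = 1) (r : Ω → ℝ) (hr0 : ∀ ω, 0 ≤ r ω)
    (c β : ℝ) (hc0 : 0 < c) (hc1 : c ≤ 1)
    (hlt : ∑ ω ∈ univ.filter (fun ω => r ω < β), p ω ≤ c)
    (hle : c ≤ ∑ ω ∈ univ.filter (fun ω => r ω ≤ β), p ω)
    (gstar : Ω → ℝ) (hgstar01 : ∀ ω, gstar ω ∈ Set.Icc (0 : ℝ) 1)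
    (hgstar1 : ∀ ω, r ω < β → gstar ω = 1)
    (hgstar0 : ∀ ω, β < r ω → gstar ω = 0)
    (hgstarcov : ∑ ω, p ω * gstar ω = c)
    (g : Ω → ℝ) (hg01 : ∀ ω, g ω ∈ Set.Icc (0 : ℝ) 1)
    (hgcov : c ≤ ∑ ω, p ω * g ω) :
    (∑ ω, p ω * gstar ω * r ω) / c
      ≤ (∑ ω, p ω * g ω * r ω) / (∑ ω, p ω * g ω) := by
  set A := ∑ ω, p ω * g ω * r ω with hA
  set B := ∑ ω, p ω * g ω with hB
  set As := ∑ ω, p ω * gstar ω * r ω with hAs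
  have hBpos : 0 < B := lt_of_lt_of_le hc0 hgcov
  -- A* ≤ β * c
  have hAsle : As ≤ β * c := by
    rw [hAs, ← hgstarcov, Finset.mul_sum]
    apply Finset.sum_le_sum
    intro ω _
    rcases le_or_gt (r ω) β with h | h
    · have h0 : 0 ≤ p ω * gstar ω :=
        mul_nonneg (hp0 ω) (hgstar01 ω).1
      calc p ω * gstar ω * r ω ≤ p ω * gstar ω * β := by
            exact mul_le_mul_of_nonneg_left h h0
        _ = β * (p ω * gstar ω) := by ring
    · rw [hgstar0 ω h]; ring_nf; simp
  -- key inequality: ∑ p (g - g*)(r - β) ≥ 0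
  have hkey : 0 ≤ ∑ ω, p ω * ((g ω - gstar ω) * (r ω - β)) := by
    apply Finset.sum_nonneg
    intro ω _
    apply mul_nonneg (hp0 ω)
    rcases lt_trichotomy (r ω) β with h | h | h
    · have := hgstar1 ω h
      have := (hg01 ω).2
      nlinarith
    · simp [h]
    · have := hgstar0 ω h
      have := (hg01 ω).1
      nlinarith
  have hexp : ∑ ω, p ω * ((g ω - gstar ω) * (r ω - β))
      = A - β * B - (As - β * c) := by
    rw [hA, hB, hAs, ← hgstarcov, Finset.mul_sum, Finset.mul_sum,
      ← Finset.sum_sub_distrib, ← Finset.sum_sub_distrib, ← Finset.sum_sub_distrib]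
    exact Finset.sum_congr rfl fun ω _ => by ring
  have hkey2 : As + β * (B - c) ≤ A := by nlinarith [hkey, hexp.symm ▸ hkey]
  rw [div_le_div_iff₀ hc0 hBpos]
  nlinarith [hgcov]
end

section
/- Necessity of full acceptance below the threshold (finite version): under the setting of the optimal thresholding theorem, if g : Ω → [0,1] has coverage exactly c, vanishes on {r>β}, but Σ_{ω: r(ω)<β} p(ω)(1−g(ω)) > 0 (i.e., it fails to fully accept the low-risk region), and β > r(ω) strictly for those ω, then the selective risk of g is strictly larger than that of the thresholding rule g*: Σ p·g·r > Σ p·g*·r. -/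
open Finset

/-- Necessity of full acceptance below the threshold (finite version): a feasible
selection function with coverage exactly `c` that vanishes above the threshold but
fails to fully accept the low-risk region has strictly larger selective risk than
the thresholding rule `g*`. -/
theorem threshold_full_acceptance_necessary {Ω : Type*} [Fintype Ω] (p : Ω → ℝ)
    (hp0 : ∀ ω, 0 ≤ p ω) (hp1 : ∑ ω, p ω = 1) (r : Ω → ℝ) (hr0 : ∀ ω, 0 ≤ r ω)
    (c β : ℝ) (hc0 : 0 < c) (hc1 : c ≤ 1)
    (hlt : ∑ ω ∈ univ.filter (fun ω => r ω < β), p ω ≤ c)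
    (hle : c ≤ ∑ ω ∈ univ.filter (fun ω => r ω ≤ β), p ω)
    (gstar : Ω → ℝ) (hgstar01 : ∀ ω, gstar ω ∈ Set.Icc (0 : ℝ) 1)
    (hgstar1 : ∀ ω, r ω < β → gstar ω = 1)
    (hgstar0 : ∀ ω, β < r ω → gstar ω = 0)
    (hgstarcov : ∑ ω, p ω * gstar ω = c)
    (g : Ω → ℝ) (hg01 : ∀ ω, g ω ∈ Set.Icc (0 : ℝ) 1)
    (hgcov : ∑ ω, p ω * g ω = c)
    (hgvan : ∀ ω, β < r ω → g ω = 0)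
    (hfail : 0 < ∑ ω ∈ univ.filter (fun ω => r ω < β), p ω * (1 - g ω)) :
    ∑ ω, p ω * gstar ω * r ω < ∑ ω, p ω * g ω * r ω := by
  set L := univ.filter (fun ω => r ω < β) with hL
  -- Step 1: the difference of risks equals ∑_L p (1-g) (β - r)
  have hdiff : ∑ ω, p ω * g ω * r ω - ∑ ω, p ω * gstar ω * r ω
      = ∑ ω ∈ L, p ω * (1 - g ω) * (β - r ω) := by
    have h1 : ∑ ω, p ω * g ω * r ω - ∑ ω, p ω * gstar ω * r ω
        = ∑ ω, p ω * (g ω - gstar ω) * (r ω - β)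
          + β * ((∑ ω, p ω * g ω) - ∑ ω, p ω * gstar ω) := by
      rw [← Finset.sum_sub_distrib, ← Finset.sum_sub_distrib, Finset.mul_sum,
        ← Finset.sum_add_distrib]
      exact Finset.sum_congr rfl fun ω _ => by ring
    rw [h1, hgcov, hgstarcov, sub_self, mul_zero, add_zero]
    rw [← Finset.sum_filter_add_sum_filter_not univ (fun ω => r ω < β)]
    have h2 : ∑ ω ∈ univ.filter (fun ω => ¬ r ω < β),
        p ω * (g ω - gstar ω) * (r ω - β) = 0 := by
      apply Finset.sum_eq_zero
      intro ω hω
      simp only [Finset.mem_filter, not_lt] at hω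
      rcases lt_or_eq_of_le hω.2 with h | h
      · rw [hgvan ω h, hgstar0 ω h]; ring
      · rw [← h]; ring
    rw [h2, add_zero]
    exact Finset.sum_congr rfl fun ω hω => by
      simp only [hL, Finset.mem_filter] at hω
      rw [hgstar1 ω hω.2]; ring
  -- Step 2: the right side is strictly positive
  have hpos : 0 < ∑ ω ∈ L, p ω * (1 - g ω) * (β - r ω) := by
    have hnn : ∀ ω ∈ L, 0 ≤ p ω * (1 - g ω) * (β - r ω) := by
      intro ω hω
      simp only [hL, Finset.mem_filter] at hω
      have h1 := (hg01 ω).2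
      have h2 := hp0 ω
      have h3 : 0 ≤ β - r ω := by linarith [hω.2]
      have h4 : 0 ≤ 1 - g ω := by linarith
      exact mul_nonneg (mul_nonneg h2 h4) h3
    obtain ⟨ω, hωL, hωpos⟩ : ∃ ω ∈ L, 0 < p ω * (1 - g ω) := by
      by_contra h
      push_neg at h
      have : ∑ ω ∈ L, p ω * (1 - g ω) ≤ 0 :=
        Finset.sum_nonpos fun ω hω => h ω hω
      linarith [hfail]
    refine Finset.sum_pos' hnn ⟨ω, hωL, ?_⟩
    have hωlt : r ω < β := by
      simp only [hL, Finset.mem_filter] at hωL; exact hωL.2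
    have : 0 < β - r ω := by linarith
    exact mul_pos hωpos this
  linarith [hdiff, hpos]
end
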